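/- Let f_n : A^n → A be a functor on an abelian category A, additive in each variable, and let d₀, d₁ : X₁ → X₀ be a reflexive pair with common section s₀. Then the subobject Σ_{i=1}^n Im f_n(X₀,…, (d₀−d₁)(X₁) at place i, …, X₀) of f_n(X₀,…,X₀) equals Im(f_n(d₀,…,d₀) − f_n(d₁,…,d₁)). -/

import Mathlib

open CategoryTheory Limits

/-- The partial functor of a functor of `n` variables: all variables except the
`i`-th are frozen at the objects `X j`. -/
def partialFunctor {𝒜 : Type*} [Category 𝒜] {n : ℕ}
    (G : (∀ _ : Fin n, 𝒜) ⥤ 𝒜) (X : Fin n → 𝒜) (i : Fin n) : 𝒜 ⥤ 𝒜 :=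
  Functor.pi' (fun j => if j = i then 𝟭 𝒜 else (Functor.const 𝒜).obj (X j)) ⋙ G

/-- The morphism `(X₀,…, X₁ at place i, …, X₀) ⟶ (X₀,…,X₀)` in `𝒜^n` whose
`i`-th component is `d₀ - d₁` and whose other components are identities. -/
noncomputable def deltaHom {𝒜 : Type*} [Category 𝒜] [Abelian 𝒜] {n : ℕ}
    {X₁ X₀ : 𝒜} (d₀ d₁ : X₁ ⟶ X₀) (i : Fin n) :
    (Function.update (fun _ => X₀ : Fin n → 𝒜) i X₁ : ∀ _ : Fin n, 𝒜) ⟶ (fun _ => X₀) :=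
  fun j =>
    if h : j = i then
      eqToHom (by subst h; simp) ≫ (d₀ - d₁)
    else
      eqToHom (by simp [Function.update_of_ne h])

section Aux

variable {𝒜 : Type*} [Category 𝒜] [Abelian 𝒜] {n : ℕ}

/-- Generalization of `deltaHom` to an arbitrary morphism in the `i`-th slot. -/
noncomputable def singleHom {X₁ X₀ : 𝒜} (φ : X₁ ⟶ X₀) (i : Fin n) :
    (Function.update (fun _ => X₀ : Fin n → 𝒜) i X₁ : ∀ _ : Fin n, 𝒜) ⟶ (fun _ => X₀) :=
  fun j =>
    if h : j = i then
      eqToHom (by subst h; simp) ≫ φ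
    else
      eqToHom (by simp [Function.update_of_ne h])

theorem deltaHom_eq_singleHom {X₁ X₀ : 𝒜} (d₀ d₁ : X₁ ⟶ X₀) (i : Fin n) :
    deltaHom d₀ d₁ i = singleHom (d₀ - d₁) i := rfl

theorem update_eq_partial_obj {X₁ X₀ : 𝒜} (i : Fin n) :
    (Function.update (fun _ => X₀ : Fin n → 𝒜) i X₁ : Fin n → 𝒜) =
      fun j => (if j = i then 𝟭 𝒜 else (Functor.const 𝒜).obj X₀).obj X₁ := by
  funext j
  by_cases h : j = i
  · subst h; simp
  · simp [Function.update_of_ne h, if_neg h]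

theorem const_eq_partial_obj {X₀ : 𝒜} (i : Fin n) :
    (fun _ => X₀ : Fin n → 𝒜) =
      fun j => (if j = i then 𝟭 𝒜 else (Functor.const 𝒜).obj X₀).obj X₀ := by
  funext j
  by_cases h : j = i <;> simp [h]

private theorem conj_id {X₁ X₀ A : 𝒜} (φ : X₁ ⟶ X₀) (F : 𝒜 ⥤ 𝒜) (hF : F = 𝟭 𝒜)
    (e₁ : A = F.obj X₁) (e₂ : F.obj X₀ = X₀) (e₃ : A = X₁) :
    eqToHom e₃ ≫ φ = eqToHom e₁ ≫ F.map φ ≫ eqToHom e₂ := by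
  subst hF
  simp

private theorem conj_const {X₁ X₀ A : 𝒜} (φ : X₁ ⟶ X₀) (F : 𝒜 ⥤ 𝒜) (Y : 𝒜)
    (hF : F = (Functor.const 𝒜).obj Y) (e₁ : A = F.obj X₁) (e₂ : F.obj X₀ = X₀)
    (e₃ : A = X₀) :
    eqToHom e₃ = eqToHom e₁ ≫ F.map φ ≫ eqToHom e₂ := by
  subst hF
  simp

theorem map_singleHom (G : (∀ _ : Fin n, 𝒜) ⥤ 𝒜) {X₁ X₀ : 𝒜} (φ : X₁ ⟶ X₀) (i : Fin n) :
    G.map (singleHom φ i) =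
      eqToHom (congrArg G.obj (update_eq_partial_obj i)) ≫
        (partialFunctor G (fun _ => X₀) i).map φ ≫
          eqToHom (congrArg G.obj (const_eq_partial_obj i)).symm := by
  have key : singleHom φ i =
      eqToHom (update_eq_partial_obj (X₁ := X₁) (X₀ := X₀) i) ≫
        (Functor.pi' (fun j => if j = i then 𝟭 𝒜 else (Functor.const 𝒜).obj X₀)).map φ ≫
          eqToHom (const_eq_partial_obj (X₀ := X₀) i).symm := by
    funext j
    erw [show ∀ {X Y Z W : ∀ _ : Fin n, 𝒜} (f : X ⟶ Y) (g : Y ⟶ Z) (h : Z ⟶ W),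
        (f ≫ g ≫ h) j = f j ≫ g j ≫ h j from fun _ _ _ => rfl]
    erw [Functor.eqToHom_proj, Functor.eqToHom_proj]
    show singleHom φ i j = _ ≫ (if j = i then 𝟭 𝒜 else (Functor.const 𝒜).obj X₀).map φ ≫ _
    by_cases h : j = i
    · subst h
      rw [singleHom, dif_pos rfl]
      exact conj_id φ _ (if_pos rfl) _ _ _
    · rw [singleHom, dif_neg h]
      exact conj_const φ _ X₀ (if_neg h) _ _ _
  rw [key, G.map_comp]
  erw [G.map_comp]
  erw [eqToHom_map, eqToHom_map]
  rfl

theorem map_singleHom_sub (G : (∀ _ : Fin n, 𝒜) ⥤ 𝒜)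
    (hadd : ∀ (X : Fin n → 𝒜) (i : Fin n), (partialFunctor G X i).Additive)
    {X₁ X₀ : 𝒜} (φ ψ : X₁ ⟶ X₀) (i : Fin n) :
    G.map (singleHom (φ - ψ) i) = G.map (singleHom φ i) - G.map (singleHom ψ i) := by
  haveI := hadd (fun _ => X₀) i
  rw [map_singleHom, map_singleHom, map_singleHom, Functor.map_sub]
  erw [Preadditive.sub_comp, Preadditive.comp_sub]

/-- The section morphism `(X₀,…,X₁ at i,…,X₀) ⟶ (X₁,…,X₁)`. -/
noncomputable def sigmaHom {X₁ X₀ : 𝒜} (s₀ : X₀ ⟶ X₁) (i : Fin n) :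
    (Function.update (fun _ => X₀ : Fin n → 𝒜) i X₁ : ∀ _ : Fin n, 𝒜) ⟶ (fun _ => X₁) :=
  fun j =>
    if h : j = i then
      eqToHom (by subst h; simp)
    else
      eqToHom (by simp [Function.update_of_ne h]) ≫ s₀

theorem sigmaHom_comp {X₁ X₀ : 𝒜} (s₀ : X₀ ⟶ X₁) (d : X₁ ⟶ X₀) (hs : s₀ ≫ d = 𝟙 X₀)
    (i : Fin n) :
    sigmaHom s₀ i ≫ (fun _ => d : (fun _ => X₁ : ∀ _ : Fin n, 𝒜) ⟶ (fun _ => X₀)) =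
      singleHom d i := by
  funext j
  show sigmaHom s₀ i j ≫ d = singleHom d i j
  by_cases h : j = i
  · subst h
    simp [sigmaHom, singleHom]
  · simp only [sigmaHom, singleHom, dif_neg h, Category.assoc, hs, Category.comp_id]

/-- The "staircase" morphisms `(X₁,…,X₁) ⟶ (X₀,…,X₀)`. -/
noncomputable def mHom {X₁ X₀ : 𝒜} (d₀ d₁ : X₁ ⟶ X₀) (k : ℕ) :
    (fun _ => X₁ : ∀ _ : Fin n, 𝒜) ⟶ (fun _ => X₀) :=
  fun j => if (j : ℕ) < k then d₀ else d₁

/-- The morphism `(X₁,…,X₁) ⟶ (X₀,…,X₁ at i,…,X₀)`. -/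
noncomputable def wHom {X₁ X₀ : 𝒜} (d₀ d₁ : X₁ ⟶ X₀) (i : Fin n) :
    (fun _ => X₁ : ∀ _ : Fin n, 𝒜) ⟶
      (Function.update (fun _ => X₀ : Fin n → 𝒜) i X₁ : ∀ _ : Fin n, 𝒜) :=
  fun j =>
    if h : j = i then
      eqToHom (by subst h; simp)
    else
      (if (j : ℕ) < (i : ℕ) then d₀ else d₁) ≫ eqToHom (by simp [Function.update_of_ne h])

theorem wHom_comp_singleHom₀ {X₁ X₀ : 𝒜} (d₀ d₁ : X₁ ⟶ X₀) (i : Fin n) :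
    wHom d₀ d₁ i ≫ singleHom d₀ i = mHom d₀ d₁ ((i : ℕ) + 1) := by
  funext j
  show wHom d₀ d₁ i j ≫ singleHom d₀ i j = mHom d₀ d₁ ((i : ℕ) + 1) j
  by_cases h : j = i
  · subst h
    simp [wHom, singleHom, mHom]
  · have hne : (j : ℕ) ≠ (i : ℕ) := fun hc => h (Fin.ext hc)
    have hlt : ((j : ℕ) < (i : ℕ) + 1) = ((j : ℕ) < (i : ℕ)) := by
      apply propext; omega
    simp only [wHom, singleHom, mHom, dif_neg h, Category.assoc, eqToHom_trans, eqToHom_refl,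
      Category.comp_id, hlt]

theorem wHom_comp_singleHom₁ {X₁ X₀ : 𝒜} (d₀ d₁ : X₁ ⟶ X₀) (i : Fin n) :
    wHom d₀ d₁ i ≫ singleHom d₁ i = mHom d₀ d₁ (i : ℕ) := by
  funext j
  show wHom d₀ d₁ i j ≫ singleHom d₁ i j = mHom d₀ d₁ (i : ℕ) j
  by_cases h : j = i
  · subst h
    simp [wHom, singleHom, mHom]
  · simp only [wHom, singleHom, mHom, dif_neg h, Category.assoc, eqToHom_trans, eqToHom_refl,
      Category.comp_id]

theorem imageSubobject_sum_le {X Y : 𝒜} {ι : Type*} (s : Finset ι) (t : ι → (X ⟶ Y))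
    (L : Subobject Y) (h : ∀ i ∈ s, imageSubobject (t i) ≤ L) :
    imageSubobject (∑ i ∈ s, t i) ≤ L := by
  refine imageSubobject_le _
    (∑ i ∈ s.attach, (factorThruImageSubobject (t i) ≫ Subobject.ofLE _ _ (h i i.2))) ?_
  rw [Preadditive.sum_comp, ← Finset.sum_attach s t]
  refine Finset.sum_congr rfl fun i _ => ?_
  rw [Category.assoc, Subobject.ofLE_arrow, imageSubobject_arrow_comp]

end Aux

/-- for `f_n : 𝒜^n → 𝒜` additive in each variable and a reflexive
pair `d₀, d₁ : X₁ ⟶ X₀` with common section `s₀`, the sum of the images of the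
maps `f_n(X₀,…,(d₀−d₁)(X₁) at place i,…,X₀)` equals the image of
`f_n(d₀,…,d₀) − f_n(d₁,…,d₁)` as subobjects of `f_n(X₀,…,X₀)`. -/
theorem statement9 {𝒜 : Type*} [Category 𝒜] [Abelian 𝒜] {n : ℕ}
    (G : (∀ _ : Fin n, 𝒜) ⥤ 𝒜)
    (hadd : ∀ (X : Fin n → 𝒜) (i : Fin n), (partialFunctor G X i).Additive)
    {X₁ X₀ : 𝒜} (d₀ d₁ : X₁ ⟶ X₀) (s₀ : X₀ ⟶ X₁)
    (hs₀ : s₀ ≫ d₀ = 𝟙 X₀) (hs₁ : s₀ ≫ d₁ = 𝟙 X₀) :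
    (Finset.univ.sup fun i : Fin n => imageSubobject (G.map (deltaHom d₀ d₁ i))) =
      imageSubobject
        (G.map (fun _ => d₀ : (fun _ => X₁ : ∀ _ : Fin n, 𝒜) ⟶ (fun _ => X₀)) -
          G.map (fun _ => d₁ : (fun _ => X₁ : ∀ _ : Fin n, 𝒜) ⟶ (fun _ => X₀))) := by
  set cd₀ : (fun _ => X₁ : ∀ _ : Fin n, 𝒜) ⟶ (fun _ => X₀) := fun _ => d₀ with hcd₀
  set cd₁ : (fun _ => X₁ : ∀ _ : Fin n, 𝒜) ⟶ (fun _ => X₀) := fun _ => d₁ with hcd₁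
  apply le_antisymm
  · apply Finset.sup_le
    intro i _
    have factorA : G.map (deltaHom d₀ d₁ i) =
        G.map (sigmaHom s₀ i) ≫ (G.map cd₀ - G.map cd₁) := by
      rw [Preadditive.comp_sub, ← G.map_comp, ← G.map_comp,
        sigmaHom_comp s₀ d₀ hs₀ i, sigmaHom_comp s₀ d₁ hs₁ i,
        deltaHom_eq_singleHom, map_singleHom_sub G hadd]
    rw [factorA]
    exact imageSubobject_comp_le _ _
  · have hterm : ∀ i : Fin n,
        G.map (mHom d₀ d₁ ((i : ℕ) + 1)) - G.map (mHom d₀ d₁ (i : ℕ)) =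
          G.map (wHom d₀ d₁ i) ≫ G.map (deltaHom d₀ d₁ i) := by
      intro i
      rw [deltaHom_eq_singleHom, map_singleHom_sub G hadd, Preadditive.comp_sub,
        ← G.map_comp, ← G.map_comp, wHom_comp_singleHom₀, wHom_comp_singleHom₁]
    have hmn : mHom d₀ d₁ n = cd₀ := by
      funext j
      simp [mHom, j.isLt, hcd₀]
    have hm0 : mHom d₀ d₁ 0 = cd₁ := by
      funext j
      simp [mHom, hcd₁]
    have key : G.map cd₀ - G.map cd₁ =
        ∑ i : Fin n, G.map (wHom d₀ d₁ i) ≫ G.map (deltaHom d₀ d₁ i) := by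
      rw [← hmn, ← hm0,
        ← Finset.sum_range_sub (fun k => G.map (mHom (X₁ := X₁) (X₀ := X₀) d₀ d₁ k)) n]
      rw [show (∑ i : Fin n, G.map (wHom d₀ d₁ i) ≫ G.map (deltaHom d₀ d₁ i)) =
          ∑ i : Fin n, (G.map (mHom d₀ d₁ ((i : ℕ) + 1)) - G.map (mHom d₀ d₁ (i : ℕ))) from
        Finset.sum_congr rfl fun i _ => (hterm i).symm]
      rw [Fin.sum_univ_eq_sum_range (fun k => G.map (mHom d₀ d₁ (k + 1)) - G.map (mHom d₀ d₁ k)) n]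
    rw [key]
    apply imageSubobject_sum_le
    intro i _
    exact le_trans (imageSubobject_comp_le _ _)
      (Finset.le_sup (f := fun i => imageSubobject (G.map (deltaHom d₀ d₁ i)))
        (Finset.mem_univ i))
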